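/- Fix weights w_1 ≥ ... ≥ w_n ≥ 0 with at least two distinct values, and d ≥ n. Define C° by: C°_j = d·w_1 − 1 for 1 ≤ j ≤ h_k; C°_{h_k+1} = (h_k − 1)·w_1 + (d − h_k + 1)·w'' + (a_k − 1); C°_j = d·w_j + (a_{k−t} − 1) for h_{k−t} < j ≤ h_{k−1−t}, 0 ≤ t ≤ k−1. Then C°_1 ≥ C°_2 ≥ ... ≥ C°_n, i.e., the sequence C° is non-increasing. -/
import Mathlib


/-- Conjugate-partition decomposition of the weight sequence `w` of length `n`:
`w' = (n^{a_0}, h_1^{a_1}, …, h_k^{a_k})` with `h_0 = n`,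
`n > h_1 > ⋯ > h_k > 0` and `a_1, …, a_k > 0`, expressed row-wise. -/
def ConjDecomp (w : ℕ → ℕ) (n k : ℕ) (h a : ℕ → ℕ) : Prop :=
  h 0 = n ∧
  (∀ t, t < k → h (t + 1) < h t) ∧
  0 < h k ∧
  (∀ t, 1 ≤ t → t ≤ k → 0 < a t) ∧
  (∀ t, t < k → ∀ i, h (t + 1) < i → i ≤ h t →
      w i = ∑ s ∈ Finset.range (t + 1), a s) ∧
  (∀ i, 1 ≤ i → i ≤ h k → w i = ∑ s ∈ Finset.range (k + 1), a s)

/-- The capacity sequence `C°` of the optimality construction (Section 6):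
`C°_j = d·w_1 − 1` for `1 ≤ j ≤ h_k`;
`C°_{h_k+1} = (h_k − 1)·w_1 + (d − h_k + 1)·w_{h_k+1} + (a_k − 1)`;
`C°_j = d·w_j + (a_k − 1)` for `h_k + 1 < j ≤ h_{k−1}`;
`C°_j = d·w_j + (a_{k−t} − 1)` for `h_{k−t} < j ≤ h_{k−1−t}`, `1 ≤ t ≤ k−1`. -/
def IsCCirc (w : ℕ → ℕ) (n k d : ℕ) (h a : ℕ → ℕ) (C : ℕ → ℤ) : Prop :=
  (∀ j, 1 ≤ j → j ≤ h k → C j = (d : ℤ) * w 1 - 1) ∧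
  (C (h k + 1) = ((h k : ℤ) - 1) * w 1 + ((d : ℤ) - h k + 1) * w (h k + 1) + ((a k : ℤ) - 1)) ∧
  (∀ j, h k + 1 < j → j ≤ h (k - 1) → C j = (d : ℤ) * w j + ((a k : ℤ) - 1)) ∧
  (∀ t, 1 ≤ t → t ≤ k - 1 → ∀ j, h (k - t) < j → j ≤ h (k - t - 1) →
      C j = (d : ℤ) * w j + ((a (k - t) : ℤ) - 1))


/-- the sequence `C°` is non-increasing. -/
theorem cCirc_antitone
    (n d k : ℕ) (hn : 1 ≤ n) (hk : 1 ≤ k) (hd : n ≤ d)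
    (w : ℕ → ℕ) (h a : ℕ → ℕ) (C : ℕ → ℤ)
    (hw : ∀ i, 1 ≤ i → i < n → w (i + 1) ≤ w i)
    (hconj : ConjDecomp w n k h a)
    (hC : IsCCirc w n k d h a C) :
    ∀ j, 1 ≤ j → j < n → C (j + 1) ≤ C j := by
  obtain ⟨hh0, hhdec, hhk, ha, hwblock, hwlast⟩ := hconj
  obtain ⟨hC1, hC2, hC3, hC4⟩ := hC
  -- weak antitonicity of h
  have hanti : ∀ s t : ℕ, s ≤ t → t ≤ k → h t ≤ h s := by
    intro s t hst htk
    induction t with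
    | zero =>
      obtain rfl : s = 0 := Nat.le_zero.mp hst
      exact le_rfl
    | succ t ih =>
      rcases Nat.lt_or_ge s (t + 1) with hlt | hge
      · exact le_trans (le_of_lt (hhdec t (by omega))) (ih (by omega) (by omega))
      · have hst' : s = t + 1 := by omega
        rw [hst']
  have hanti' : ∀ s t : ℕ, s ≤ k → t ≤ k → h s < h t → t < s := by
    intro s t hs ht hlt
    by_contra hc
    push_neg at hc
    exact absurd (hanti s t hc ht) (by omega)
  -- block membership
  have hmem : ∀ j, h k < j → j ≤ n → ∃ m, m < k ∧ h (m + 1) < j ∧ j ≤ h m ∧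
      w j = ∑ s ∈ Finset.range (m + 1), a s := by
    intro j hj1 hj2
    have hP0 : j ≤ h 0 := by rw [hh0]; exact hj2
    set m := Nat.findGreatest (fun m => j ≤ h m) k with hm
    have hPm : j ≤ h m := Nat.findGreatest_spec (P := fun m => j ≤ h m) (Nat.zero_le k) hP0
    have hmk : m ≤ k := Nat.findGreatest_le k
    have hmlt : m < k := by
      rcases Nat.lt_or_ge m k with h1 | h1
      · exact h1
      · exfalso
        have : m = k := le_antisymm hmk h1
        rw [this] at hPm; omega
    have hnP : ¬ (j ≤ h (m + 1)) :=
      Nat.findGreatest_is_greatest (P := fun m => j ≤ h m)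
        (show Nat.findGreatest (fun m => j ≤ h m) k < m + 1 by omega) (by omega)
    exact ⟨m, hmlt, by omega, hPm, hwblock m hmlt j (by omega) hPm⟩
  -- C formula on blocks
  have hCblock : ∀ j m, h k + 1 < j → m < k → h (m + 1) < j → j ≤ h m →
      C j = (d : ℤ) * w j + ((a (m + 1) : ℤ) - 1) := by
    intro j m hj hmk hjl hju
    rcases Nat.lt_or_ge (m + 1) k with h1 | h1
    · have hkt : k - (k - m - 1) = m + 1 := by omega
      have ht := hC4 (k - m - 1) (by omega) (by omega) j
        (by rw [hkt]; exact hjl) (by rw [show k - (k - m - 1) - 1 = m by omega]; exact hju)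
      rw [ht, hkt]
    · have hm' : m = k - 1 := by omega
      have hmk1 : m + 1 = k := by omega
      rw [hmk1]
      exact hC3 j hj (by rw [← hm']; exact hju)
  have hw1 : w 1 = ∑ s ∈ Finset.range (k + 1), a s := hwlast 1 le_rfl hhk
  have hwq : w (h k + 1) = ∑ s ∈ Finset.range k, a s := by
    have h1 : h k < h (k - 1) := by
      have := hhdec (k - 1) (by omega)
      rwa [show k - 1 + 1 = k by omega] at this
    have := hwblock (k - 1) (by omega) (h k + 1)
      (by rw [show k - 1 + 1 = k by omega]; omega) (by omega)
    rwa [show k - 1 + 1 = k by omega] at this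
  have e1 : w 1 = w (h k + 1) + a k := by
    rw [hw1, hwq, Finset.sum_range_succ]
  have hkd : h k ≤ d := le_trans (le_trans (hanti 0 k (Nat.zero_le k) le_rfl) (le_of_eq hh0)) hd
  have hd1 : (1 : ℤ) ≤ (d : ℤ) := by exact_mod_cast le_trans hn hd
  intro j hj1 hjn
  rcases Nat.lt_or_ge j (h k) with hcase | hcase
  · -- j + 1 ≤ h k
    rw [hC1 j hj1 (by omega), hC1 (j + 1) (by omega) (by omega)]
  rcases Nat.eq_or_lt_of_le hcase with hcase2 | hcase2
  · -- j = h k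
    obtain rfl : j = h k := hcase2.symm
    rw [hC1 (h k) hj1 le_rfl, hC2]
    have e1' : (w 1 : ℤ) = (w (h k + 1) : ℤ) + (a k : ℤ) := by exact_mod_cast e1
    have hkd' : (h k : ℤ) ≤ (d : ℤ) := by exact_mod_cast hkd
    have hk1 : (1 : ℤ) ≤ (h k : ℤ) := by exact_mod_cast hhk
    have hak : (0:ℤ) ≤ (a k : ℤ) := by positivity
    linarith [mul_nonneg (sub_nonneg.mpr hkd')
      (show (0:ℤ) ≤ (w 1 : ℤ) - (w (h k + 1) : ℤ) by linarith)]
  -- now h k < j, i.e. h k + 1 ≤ j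
  obtain ⟨m', hm'k, hm'l, hm'u, hm'w⟩ := hmem (j + 1) (by omega) (by omega)
  have hCj1 : C (j + 1) = (d : ℤ) * w (j + 1) + ((a (m' + 1) : ℤ) - 1) :=
    hCblock (j + 1) m' (by omega) hm'k hm'l hm'u
  have hwmono : w (j + 1) ≤ w j := hw j hj1 hjn
  have hwmono' : (w (j + 1) : ℤ) ≤ (w j : ℤ) := by exact_mod_cast hwmono
  rcases Nat.eq_or_lt_of_le hcase2 with hcase3 | hcase3
  · -- j = h k + 1
    obtain rfl : j = h k + 1 := hcase3.symm
    rw [hC2, hCj1]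
    have hsub : w (h k + 1 + 1) + a (m' + 1) ≤ w 1 := by
      rw [hw1, hm'w, ← Finset.sum_range_succ]
      exact Finset.sum_le_sum_of_subset (Finset.range_subset_range.mpr (by omega))
    have hsub' : (w (h k + 1 + 1) : ℤ) + (a (m' + 1) : ℤ) ≤ (w 1 : ℤ) := by exact_mod_cast hsub
    have e1' : (w 1 : ℤ) = (w (h k + 1) : ℤ) + (a k : ℤ) := by exact_mod_cast e1
    have hk1 : (1 : ℤ) ≤ (h k : ℤ) := by exact_mod_cast hhk
    linarith [mul_nonneg (sub_nonneg.mpr hk1)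
        (show (0:ℤ) ≤ (w 1 : ℤ) - (w (h k + 1) : ℤ) by
          have : (0:ℤ) ≤ (a k : ℤ) := by positivity
          linarith),
      mul_nonneg (sub_nonneg.mpr hd1) (sub_nonneg.mpr hwmono')]
  · -- h k + 1 < j
    obtain ⟨m, hmk, hml, hmu, hmw⟩ := hmem j (by omega) (by omega)
    have hCj : C j = (d : ℤ) * w j + ((a (m + 1) : ℤ) - 1) :=
      hCblock j m hcase3 hmk hml hmu
    have hm'm : m' ≤ m := by
      have : h (m + 1) < h m' := by omega
      have := hanti' (m + 1) m' (by omega) (by omega) this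
      omega
    have hsub : w (j + 1) + a (m' + 1) ≤ w j + a (m + 1) := by
      rw [hmw, hm'w, ← Finset.sum_range_succ, ← Finset.sum_range_succ]
      exact Finset.sum_le_sum_of_subset (Finset.range_subset_range.mpr (by omega))
    have hsub' : (w (j + 1) : ℤ) + (a (m' + 1) : ℤ) ≤ (w j : ℤ) + (a (m + 1) : ℤ) := by
      exact_mod_cast hsub
    rw [hCj, hCj1]
    linarith [mul_nonneg (sub_nonneg.mpr hd1) (sub_nonneg.mpr hwmono')]
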